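/- Let q ∈ ℂ with 0 < |q| < 1, let N ≥ 1, let B₁,…,B_N be M×M complex matrices, let t₁,…,t_N ∈ ℂ, fix an index j with t_j = t ≠ 0 and let t' ∈ ℂ∖{0} with t' ≠ t_i for all i ≠ j. Define g(x) = ∏_{k=0}^∞ (1 − x qᵏ/t')/(1 − x qᵏ/t). Fix x ∈ ℂ with x ≠ 0, x ∉ {t₁,…,t_N} ∪ {t'}, and x·qᵏ ∉ {t, t'} for all integers k ≥ 0. If y : ℂ → ℂ^M satisfies (D_q y)(x) = Σ_{i=1}^N (x − t_i)⁻¹ B_i y(x) at x, then y'(z) = g(z)·y(z) satisfies (D_q y')(x) = [Σ_{i≠j} (x − t_i)⁻¹ B'_i + (x − t')⁻¹ B'_j]·y'(x), where B'_i = (t'/t)·((t_i − t)/(t_i − t'))·B_i for i ≠ j, and B'_j = Σ_{i≠j} (t'/t)·((t' − t)/(t' − t_i))·B_i + (t'/t)·B_j + ((t − t')/(t(1−q)))·I_M. (This transformation is the addition: it replaces the singular point t_j = t by t' and the residue matrices B_i by B'_i.) -/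

import Mathlib

/-- The gauge factor `g(x) = (x/t')_∞/(x/t)_∞ = ∏_{k=0}^∞ (1 − xqᵏ/t')/(1 − xqᵏ/t)`. -/
noncomputable def qGauge (q t t' x : ℂ) : ℂ :=
  ∏' k : ℕ, (1 - x * q ^ k / t') / (1 - x * q ^ k / t)

set_option maxHeartbeats 1000000

open Filter Topology

lemma qGauge_multipliable (q t t' x : ℂ) (hq1 : ‖q‖ < 1) (ht : t ≠ 0) (ht' : t' ≠ 0)
    (hden : ∀ k : ℕ, x * q ^ k ≠ t) (hnum : ∀ k : ℕ, x * q ^ k ≠ t') :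
    Multipliable (fun k : ℕ => (1 - x * q ^ k / t') / (1 - x * q ^ k / t)) := by
  have hd : ∀ k : ℕ, (1 : ℂ) - x * q ^ k / t ≠ 0 := by
    intro k h
    rw [sub_eq_zero] at h
    exact hden k ((div_eq_one_iff_eq ht).mp h.symm)
  have hn : ∀ k : ℕ, (1 : ℂ) - x * q ^ k / t' ≠ 0 := by
    intro k h
    rw [sub_eq_zero] at h
    exact hnum k ((div_eq_one_iff_eq ht').mp h.symm)
  set C : ℂ := x * (t' - t) / (t * t') with hC
  set e : ℕ → ℂ := fun k => C * q ^ k / (1 - x * q ^ k / t) with he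
  have hfe : ∀ k, (1 - x * q ^ k / t') / (1 - x * q ^ k / t) = 1 + e k := by
    intro k
    rw [he, div_eq_iff (hd k), add_mul, one_mul, div_mul_cancel₀ _ (hd k), hC]
    field_simp
    ring
  have hq0' : Tendsto (fun k : ℕ => q ^ k) atTop (𝓝 0) :=
    tendsto_pow_atTop_nhds_zero_of_norm_lt_one hq1
  have hdt : Tendsto (fun k : ℕ => 1 - x * q ^ k / t) atTop (𝓝 1) := by
    have h := (tendsto_const_nhds (x := (1:ℂ))).sub ((hq0'.const_mul x).div_const t)
    simpa using h
  have he0 : Tendsto e atTop (𝓝 0) := by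
    have := ((hq0'.const_mul C).div hdt one_ne_zero)
    simpa [Pi.div_def, he] using this
  -- eventual bounds
  have hev1 : ∀ᶠ k : ℕ in atTop, (1:ℝ)/2 ≤ ‖1 - x * q ^ k / t‖ := by
    have : Tendsto (fun k : ℕ => ‖1 - x * q ^ k / t‖) atTop (𝓝 1) := by
      simpa using hdt.norm
    exact this.eventually_const_le (by norm_num)
  have hev2 : ∀ᶠ k : ℕ in atTop, ‖e k‖ ≤ 1/2 := by
    have : Tendsto (fun k => ‖e k‖) atTop (𝓝 0) := by simpa using he0.norm
    exact this.eventually_le_const (by norm_num)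
  have hsum : Summable (fun k : ℕ => Complex.log (1 + e k)) := by
    apply Summable.of_norm_bounded_eventually_nat (g := fun k => (3 * ‖C‖) * ‖q‖ ^ k)
      (((summable_geometric_of_lt_one (norm_nonneg q) hq1)).mul_left _)
    filter_upwards [hev1, hev2] with k h1 h2
    have hlog : ‖Complex.log (1 + e k)‖ ≤ (3/2) * ‖e k‖ :=
      Complex.norm_log_one_add_half_le_self h2
    have hek : ‖e k‖ ≤ (2 * ‖C‖) * ‖q‖ ^ k := by
      rw [he]
      simp only [norm_div, norm_mul, norm_pow]
      rw [div_le_iff₀ (lt_of_lt_of_le (by norm_num) h1)]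
      calc ‖C‖ * ‖q‖ ^ k ≤ (2 * ‖C‖ * ‖q‖ ^ k) * (1/2) := by ring_nf; rfl
        _ ≤ (2 * ‖C‖ * ‖q‖ ^ k) * ‖1 - x * q ^ k / t‖ := by
            apply mul_le_mul_of_nonneg_left h1
            positivity
    calc ‖Complex.log (1 + e k)‖ ≤ (3/2) * ‖e k‖ := hlog
      _ ≤ (3/2) * ((2 * ‖C‖) * ‖q‖ ^ k) := by
          apply mul_le_mul_of_nonneg_left hek; norm_num
      _ = (3 * ‖C‖) * ‖q‖ ^ k := by ring
  have := Complex.multipliable_of_summable_log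
    (f := fun k => (1 - x * q ^ k / t') / (1 - x * q ^ k / t))
    (by simpa only [hfe] using hsum)
  exact this

lemma qGauge_shift (q t t' x : ℂ) (hq1 : ‖q‖ < 1) (ht : t ≠ 0) (ht' : t' ≠ 0)
    (hden : ∀ k : ℕ, x * q ^ k ≠ t) (hnum : ∀ k : ℕ, x * q ^ k ≠ t') :
    qGauge q t t' x = (1 - x / t') / (1 - x / t) * qGauge q t t' (q * x) := by
  have hden' : ∀ k : ℕ, (q * x) * q ^ k ≠ t := by
    intro k h
    apply hden (k + 1)
    rw [pow_succ, ← h]; ring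
  have hnum' : ∀ k : ℕ, (q * x) * q ^ k ≠ t' := by
    intro k h
    apply hnum (k + 1)
    rw [pow_succ, ← h]; ring
  have hm1 : Multipliable (fun k : ℕ => (1 - (q * x) * q ^ k / t') / (1 - (q * x) * q ^ k / t)) :=
    qGauge_multipliable q t t' (q * x) hq1 ht ht' hden' hnum'
  have hshift : Multipliable (fun n : ℕ =>
      (1 - x * q ^ (n + 1) / t') / (1 - x * q ^ (n + 1) / t)) :=
    hm1.congr (fun b => by rw [pow_succ, show x * (q ^ b * q) = q * x * q ^ b from by ring])
  unfold qGauge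
  rw [tprod_eq_zero_mul' hshift]
  congr 1
  · norm_num
  · exact tprod_congr (fun k => by rw [pow_succ, show x * (q ^ k * q) = q * x * q ^ k from by ring])


/-- The addition: the gauge transformation `y ↦ g·y` replaces the singular point
`t_j` by `t'` and the residue matrices `Bᵢ` by `B'ᵢ`. -/
theorem addition_transform (q : ℂ) (hq0 : 0 < ‖q‖) (hq1 : ‖q‖ < 1)
    (M N : ℕ) (hM : 1 ≤ M) (hN : 1 ≤ N)
    (B : Fin N → Matrix (Fin M) (Fin M) ℂ) (t : Fin N → ℂ) (j : Fin N)
    (htj : t j ≠ 0) (t' : ℂ) (ht' : t' ≠ 0) (ht'i : ∀ i, i ≠ j → t' ≠ t i)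
    (x : ℂ) (hx : x ≠ 0) (hxt : ∀ i, x ≠ t i) (hxt' : x ≠ t')
    (hk : ∀ k : ℕ, x * q ^ k ≠ t j ∧ x * q ^ k ≠ t')
    (y : ℂ → Fin M → ℂ)
    (hsys : (fun m => (y x m - y (q * x) m) / ((1 - q) * x)) =
      (∑ i, (x - t i)⁻¹ • B i).mulVec (y x))
    (B' : Fin N → Matrix (Fin M) (Fin M) ℂ)
    (hB'ne : ∀ i, i ≠ j → B' i = ((t' / t j) * ((t i - t j) / (t i - t'))) • B i)
    (hB'j : B' j =
      (∑ i ∈ Finset.univ.erase j, ((t' / t j) * ((t' - t j) / (t' - t i))) • B i)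
        + (t' / t j) • B j + ((t j - t') / (t j * (1 - q))) • 1)
    (y' : ℂ → Fin M → ℂ) (hy' : ∀ z, y' z = qGauge q (t j) t' z • y z) :
    (fun m => (y' x m - y' (q * x) m) / ((1 - q) * x)) =
      ((∑ i ∈ Finset.univ.erase j, (x - t i)⁻¹ • B' i)
        + (x - t')⁻¹ • B' j).mulVec (y' x) := by

  have hq : q ≠ 1 := fun h => by rw [h] at hq1; simp at hq1
  have h1q : (1 : ℂ) - q ≠ 0 := sub_ne_zero.mpr (Ne.symm hq)
  have hqx : (1 - q) * x ≠ 0 := mul_ne_zero h1q hx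
  have hxT : x - t j ≠ 0 := sub_ne_zero.mpr (hxt j)
  have hxt'0 : x - t' ≠ 0 := sub_ne_zero.mpr hxt'
  have hct' : (1 : ℂ) - x / t' ≠ 0 := by
    rw [sub_ne_zero]; intro h; exact hxt' ((div_eq_one_iff_eq ht').mp h.symm)
  have hcT : (1 : ℂ) - x / t j ≠ 0 := by
    rw [sub_ne_zero]; intro h; exact hxt j ((div_eq_one_iff_eq htj).mp h.symm)
  have hTx : t j - x ≠ 0 := sub_ne_zero.mpr (fun h => hxt j h.symm)
  have ht'x : t' - x ≠ 0 := sub_ne_zero.mpr (fun h => hxt' h.symm)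
  have hgs := qGauge_shift q (t j) t' x hq1 htj ht' (fun k => (hk k).1) (fun k => (hk k).2)
  set g := qGauge q (t j) t' x with hg
  set c : ℂ := (1 - x / t j) / (1 - x / t') with hc
  have hgqx : qGauge q (t j) t' (q * x) = c * g := by
    rw [hgs, hc]
    field_simp
  -- express y (q*x)
  set A : Matrix (Fin M) (Fin M) ℂ := ∑ i, (x - t i)⁻¹ • B i with hA
  have hy2 : ∀ m, y (q * x) m = y x m - ((1 - q) * x) * (A.mulVec (y x)) m := by
    intro m
    have h := congrFun hsys m
    rw [div_eq_iff hqx] at h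
    linear_combination -h
  -- scalar identities
  have h1 : ∀ i : Fin N, i ≠ j →
      (x - t i)⁻¹ * (t' / t j * ((t i - t j) / (t i - t')))
        + (x - t')⁻¹ * (t' / t j * ((t' - t j) / (t' - t i))) = c * (x - t i)⁻¹ := by
    intro i hij
    have hti : x - t i ≠ 0 := sub_ne_zero.mpr (hxt i)
    have h1' : t i - t' ≠ 0 := sub_ne_zero.mpr (fun h => ht'i i hij h.symm)
    have h2' : t' - t i ≠ 0 := sub_ne_zero.mpr (ht'i i hij)
    have hti' : t i - x ≠ 0 := sub_ne_zero.mpr (fun h => hxt i h.symm)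
    rw [hc]
    field_simp
    ring
  have h2 : (x - t')⁻¹ * (t' / t j) = c * (x - t j)⁻¹ := by
    rw [hc]; field_simp; ring
  have h3 : (x - t')⁻¹ * ((t j - t') / (t j * (1 - q))) = (1 - c) / ((1 - q) * x) := by
    rw [hc]; field_simp; ring
  -- matrix identity
  have hmat : (∑ i ∈ Finset.univ.erase j, (x - t i)⁻¹ • B' i) + (x - t')⁻¹ • B' j
      = ((1 - c) / ((1 - q) * x)) • (1 : Matrix (Fin M) (Fin M) ℂ) + c • A := by
    rw [hB'j, hA,
      ← Finset.add_sum_erase _ (fun i => (x - t i)⁻¹ • B i) (Finset.mem_univ j),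
      Finset.sum_congr rfl (fun i hi => by rw [hB'ne i (Finset.ne_of_mem_erase hi)])]
    ext a b
    simp only [Matrix.add_apply, Matrix.smul_apply, Matrix.sum_apply, smul_eq_mul,
      Matrix.one_apply, mul_add, Finset.mul_sum]
    have hs : ∑ i ∈ Finset.univ.erase j, (x - t i)⁻¹ * (t' / t j * ((t i - t j) / (t i - t')) * B i a b)
          + ∑ i ∈ Finset.univ.erase j, (x - t')⁻¹ * (t' / t j * ((t' - t j) / (t' - t i)) * B i a b)
        = ∑ i ∈ Finset.univ.erase j, c * ((x - t i)⁻¹ * B i a b) := by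
      rw [← Finset.sum_add_distrib]
      refine Finset.sum_congr rfl (fun i hi => ?_)
      have := h1 i (Finset.ne_of_mem_erase hi)
      linear_combination (B i a b) * this
    linear_combination hs + (B j a b) * h2
      + (if a = b then (1:ℂ) else 0) * h3
  -- conclude
  funext m
  rw [hy' x, hy' (q * x), hgqx, hmat, ← hg]
  simp only [Pi.smul_apply, smul_eq_mul, Matrix.add_mulVec, Matrix.smul_mulVec,
    Matrix.one_mulVec, Matrix.mulVec_smul, Pi.add_apply]
  rw [hy2 m]
  field_simp
  ring
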